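/- Let N be a positive integer, M ∈ Matrix (Fin N) (Fin N) ℝ symmetric positive definite, ρ ∈ ℝ^N, and let p : ℝ^N → ℝ be the Gaussian density with mean M ρ and covariance M with respect to Lebesgue measure on ℝ^N. Let f : ℝ^N → ℝ^N be continuously differentiable with compact support, let W ∈ Matrix (Fin N) (Fin N) ℝ be arbitrary, and set D = Wᵀ W. Then ∫ ‖W (f(u) − ρ)‖² p(u) du = ∫ [ ‖W (f(u) − M⁻¹ u)‖² + 2 · div(u ↦ D f(u))(u) ] p(u) du + κ, where κ = ‖W ρ‖² − ∫ ‖W M⁻¹ u‖² p(u) du. -/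

import Mathlib

open MeasureTheory Matrix

/-- The divergence of a map `h : ℝ^N → ℝ^N` at `u`: the trace of the Fréchet derivative. -/
noncomputable def divergence {N : ℕ} (h : (Fin N → ℝ) → (Fin N → ℝ)) (u : Fin N → ℝ) : ℝ :=
  LinearMap.trace ℝ (Fin N → ℝ) (fderiv ℝ h u).toLinearMap

/-- The Gaussian density on `ℝ^N` with mean `M ρ` and covariance `M`, with respect to
Lebesgue measure:
`p(u) = ((2π)^N det M)^{-1/2} exp(−(1/2)⟨u − Mρ, M⁻¹(u − Mρ)⟩)`. -/
noncomputable def gaussDensity {N : ℕ} (M : Matrix (Fin N) (Fin N) ℝ) (ρ : Fin N → ℝ)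
    (u : Fin N → ℝ) : ℝ :=
  ((2 * Real.pi) ^ N * M.det) ^ (-(1 : ℝ) / 2) *
    Real.exp (-(1 / 2) * ((u - M.mulVec ρ) ⬝ᵥ (M⁻¹.mulVec (u - M.mulVec ρ))))

namespace EnsureAux

open MeasureTheory Matrix

variable {N : ℕ}

/-- Continuous linear map `v ↦ a ⬝ᵥ v`. -/
noncomputable def dotCLM (a : Fin N → ℝ) : (Fin N → ℝ) →L[ℝ] ℝ :=
  ∑ i, a i • (ContinuousLinearMap.proj i : (Fin N → ℝ) →L[ℝ] ℝ)

@[simp] lemma dotCLM_apply (a v : Fin N → ℝ) : dotCLM a v = a ⬝ᵥ v := by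
  simp [dotCLM, dotProduct, ContinuousLinearMap.sum_apply]

lemma hasFDerivAt_dotmul (A : Matrix (Fin N) (Fin N) ℝ) (w : Fin N → ℝ) :
    HasFDerivAt (fun w : Fin N → ℝ => w ⬝ᵥ A *ᵥ w) (dotCLM (A *ᵥ w + Aᵀ *ᵥ w)) w := by
  have h : ∀ i : Fin N, HasFDerivAt (fun w : Fin N → ℝ => w i * (A i ⬝ᵥ w))
      (w i • dotCLM (A i) + (A i ⬝ᵥ w) • (ContinuousLinearMap.proj i : (Fin N → ℝ) →L[ℝ] ℝ)) w := by
    intro i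
    have h1 : HasFDerivAt (fun w : Fin N → ℝ => w i)
        (ContinuousLinearMap.proj i : (Fin N → ℝ) →L[ℝ] ℝ) w :=
      (ContinuousLinearMap.proj i : (Fin N → ℝ) →L[ℝ] ℝ).hasFDerivAt
    have h2 : HasFDerivAt (fun w : Fin N → ℝ => A i ⬝ᵥ w) (dotCLM (A i)) w :=
      (dotCLM (A i)).hasFDerivAt.congr_of_eventuallyEq
        (Filter.Eventually.of_forall fun y => (dotCLM_apply _ y).symm)
    exact h1.mul h2
  have hsum := HasFDerivAt.fun_sum (fun i (_ : i ∈ Finset.univ) => h i)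
  have heq : (fun w : Fin N → ℝ => ∑ i, w i * (A i ⬝ᵥ w))
      = fun w : Fin N → ℝ => w ⬝ᵥ A *ᵥ w := by
    funext w
    simp [dotProduct, Matrix.mulVec]
  rw [heq] at hsum
  refine hsum.congr_fderiv ?_
  symm
  ext v
  simp only [ContinuousLinearMap.sum_apply, ContinuousLinearMap.add_apply,
    ContinuousLinearMap.smul_apply, dotCLM_apply, ContinuousLinearMap.proj_apply,
    smul_eq_mul]
  have h1 : (A *ᵥ w) ⬝ᵥ v = ∑ i, (A i ⬝ᵥ w) * v i := by
    simp [dotProduct, Matrix.mulVec]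
  have h2 : (Aᵀ *ᵥ w) ⬝ᵥ v = ∑ i, w i * (A i ⬝ᵥ v) := by
    rw [Matrix.mulVec_transpose, ← Matrix.dotProduct_mulVec]
    simp [dotProduct, Matrix.mulVec]
  rw [add_dotProduct, h1, h2, ← Finset.sum_add_distrib]
  exact Finset.sum_congr rfl fun i _ => add_comm _ _

lemma divergence_eq (h : (Fin N → ℝ) → (Fin N → ℝ)) (u : Fin N → ℝ) :
    divergence h u = ∑ i, fderiv ℝ h u (Pi.single i 1) i := by
  unfold divergence
  rw [LinearMap.trace_eq_matrix_trace ℝ (Pi.basisFun ℝ (Fin N))]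
  rw [Matrix.trace]
  refine Finset.sum_congr rfl fun i _ => ?_
  simp [Matrix.diag, LinearMap.toMatrix_apply]

end EnsureAux
namespace EnsureAux
open MeasureTheory Matrix
variable {N : ℕ}

lemma inv_symm {M : Matrix (Fin N) (Fin N) ℝ} (hM : M.PosDef) : (M⁻¹)ᵀ = M⁻¹ := by
  rw [Matrix.transpose_nonsing_inv]
  congr 1
  rw [← Matrix.conjTranspose_eq_transpose_of_trivial]
  exact hM.isHermitian

lemma gauss_pos {M : Matrix (Fin N) (Fin N) ℝ} (hM : M.PosDef) (ρ : Fin N → ℝ)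
    (u : Fin N → ℝ) : 0 < gaussDensity M ρ u := by
  have h1 : (0:ℝ) < (2 * Real.pi) ^ N * M.det :=
    mul_pos (pow_pos (by positivity) N) hM.det_pos
  unfold gaussDensity
  positivity

lemma hasFDerivAt_gauss {M : Matrix (Fin N) (Fin N) ℝ} (hM : M.PosDef) (ρ : Fin N → ℝ)
    (u : Fin N → ℝ) :
    HasFDerivAt (gaussDensity M ρ)
      (gaussDensity M ρ u • dotCLM (-(M⁻¹ *ᵥ (u - M *ᵥ ρ)))) u := by
  set μc := M *ᵥ ρ with hμc
  have hq : HasFDerivAt (fun u : Fin N → ℝ => (u - μc) ⬝ᵥ M⁻¹ *ᵥ (u - μc))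
      (dotCLM (M⁻¹ *ᵥ (u - μc) + (M⁻¹)ᵀ *ᵥ (u - μc))) u := by
    have hinner : HasFDerivAt (fun u : Fin N → ℝ => u - μc)
        (ContinuousLinearMap.id ℝ (Fin N → ℝ)) u := (hasFDerivAt_id u).sub_const μc
    have := (hasFDerivAt_dotmul M⁻¹ (u - μc)).comp u hinner
    rw [ContinuousLinearMap.comp_id] at this
    exact this
  have h2 := ((hq.const_mul (-(1/2) : ℝ)).exp).const_mul
    (((2 * Real.pi) ^ N * M.det) ^ (-(1:ℝ) / 2))
  have heq : (fun u : Fin N → ℝ => ((2 * Real.pi) ^ N * M.det) ^ (-(1:ℝ) / 2) *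
      Real.exp (-(1/2) * ((u - μc) ⬝ᵥ M⁻¹ *ᵥ (u - μc)))) = gaussDensity M ρ := rfl
  rw [heq] at h2
  refine h2.congr_fderiv ?_
  symm
  ext v
  simp only [ContinuousLinearMap.smul_apply, dotCLM_apply, smul_eq_mul, inv_symm hM]
  rw [neg_dotProduct, add_dotProduct]
  unfold gaussDensity
  ring

lemma differentiable_gauss {M : Matrix (Fin N) (Fin N) ℝ} (hM : M.PosDef) (ρ : Fin N → ℝ) :
    Differentiable ℝ (gaussDensity M ρ) :=
  fun u => (hasFDerivAt_gauss hM ρ u).differentiableAt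

lemma continuous_gauss {M : Matrix (Fin N) (Fin N) ℝ} (hM : M.PosDef) (ρ : Fin N → ℝ) :
    Continuous (gaussDensity M ρ) :=
  (differentiable_gauss hM ρ).continuous

lemma fderiv_gauss_apply {M : Matrix (Fin N) (Fin N) ℝ} (hM : M.PosDef) (ρ : Fin N → ℝ)
    (u v : Fin N → ℝ) :
    fderiv ℝ (gaussDensity M ρ) u v
      = -((M⁻¹ *ᵥ (u - M *ᵥ ρ)) ⬝ᵥ v) * gaussDensity M ρ u := by
  rw [(hasFDerivAt_gauss hM ρ u).fderiv]
  simp [mul_comm]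

end EnsureAux
namespace EnsureAux
open MeasureTheory Matrix
variable {N : ℕ}

lemma cov_measure {S : Matrix (Fin N) (Fin N) ℝ} (hS : S.det ≠ 0) :
    Measure.map (fun x : Fin N → ℝ => S *ᵥ x) volume
      = ENNReal.ofReal |S.det⁻¹| • volume := by
  have : (fun x : Fin N → ℝ => S *ᵥ x) = ⇑(Matrix.toLin' S) := by
    funext x; simp [Matrix.toLin'_apply]
  rw [this]
  exact Real.map_matrix_volume_pi_eq_smul_volume_pi hS

noncomputable def covEquiv (S : Matrix (Fin N) (Fin N) ℝ) (hS : S.det ≠ 0) :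
    (Fin N → ℝ) ≃ᵐ (Fin N → ℝ) :=
  ((Matrix.toLinearEquiv' S
      (Matrix.invertibleOfIsUnitDet S (isUnit_iff_ne_zero.mpr hS))).toContinuousLinearEquiv.toHomeomorph).toMeasurableEquiv

lemma covEquiv_apply {S : Matrix (Fin N) (Fin N) ℝ} (hS : S.det ≠ 0) (x : Fin N → ℝ) :
    covEquiv S hS x = S *ᵥ x := rfl

lemma cov_integral {S : Matrix (Fin N) (Fin N) ℝ} (hS : S.det ≠ 0) (μc : Fin N → ℝ)
    (h : (Fin N → ℝ) → ℝ) :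
    ∫ u, h u = |S.det| * ∫ x, h (μc + S *ᵥ x) := by
  have e1 : ∫ x, h (μc + S *ᵥ x) = ∫ x, (fun y => h (μc + y)) (covEquiv S hS x) := rfl
  rw [e1, ← MeasureTheory.integral_map_equiv (covEquiv S hS) (fun y => h (μc + y))]
  have e2 : Measure.map (⇑(covEquiv S hS)) volume = ENNReal.ofReal |S.det⁻¹| • volume := by
    rw [show ⇑(covEquiv S hS) = fun x : Fin N → ℝ => S *ᵥ x from rfl]
    exact cov_measure hS
  rw [e2, MeasureTheory.integral_smul_measure]
  rw [MeasureTheory.integral_add_left_eq_self (fun y => h y) μc]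
  rw [ENNReal.toReal_ofReal (abs_nonneg _)]
  rw [smul_eq_mul, ← mul_assoc, abs_inv]
  rw [mul_inv_cancel₀ (by simpa using hS), one_mul]

lemma cov_integrable {S : Matrix (Fin N) (Fin N) ℝ} (hS : S.det ≠ 0) (μc : Fin N → ℝ)
    (h : (Fin N → ℝ) → ℝ) :
    Integrable h volume ↔ Integrable (fun x => h (μc + S *ᵥ x)) volume := by
  have e0 : Integrable h volume ↔ Integrable (fun y => h (μc + y)) volume := by
    constructor
    · intro hi
      exact hi.comp_add_left μc
    · intro hi
      have := hi.comp_add_left (-μc)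
      simpa using this
  rw [e0]
  have e2 : Measure.map (⇑(covEquiv S hS)) volume = ENNReal.ofReal |S.det⁻¹| • volume :=
    cov_measure hS
  have hc0 : ENNReal.ofReal |S.det⁻¹| ≠ 0 := by
    simp [ENNReal.ofReal_eq_zero, not_le, abs_pos, hS]
  have := MeasureTheory.integrable_map_equiv (μ := volume) (covEquiv S hS)
    (fun y => h (μc + y))
  rw [e2, MeasureTheory.integrable_smul_measure hc0 ENNReal.ofReal_ne_top] at this
  exact this

end EnsureAux
namespace EnsureAux
open MeasureTheory Matrix Real
variable {N : ℕ} {M : Matrix (Fin N) (Fin N) ℝ}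

open scoped MatrixOrder in
noncomputable def _root_.Matrix.PosSemidef.sqrt {A : Matrix (Fin N) (Fin N) ℝ}
    (_hA : A.PosSemidef) : Matrix (Fin N) (Fin N) ℝ :=
  CFC.sqrt A

open scoped MatrixOrder in
lemma _root_.Matrix.PosSemidef.sqrt_mul_self {A : Matrix (Fin N) (Fin N) ℝ}
    (hA : A.PosSemidef) : hA.sqrt * hA.sqrt = A :=
  CFC.sqrt_mul_sqrt_self A hA.nonneg

open scoped MatrixOrder in
lemma _root_.Matrix.PosSemidef.posSemidef_sqrt {A : Matrix (Fin N) (Fin N) ℝ}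
    (hA : A.PosSemidef) : hA.sqrt.PosSemidef :=
  (CFC.sqrt_nonneg A).posSemidef

lemma sqrtM_det_sq (hM : M.PosDef) :
    hM.posSemidef.sqrt.det * hM.posSemidef.sqrt.det = M.det := by
  rw [← Matrix.det_mul, hM.posSemidef.sqrt_mul_self]

lemma sqrtM_det_ne_zero (hM : M.PosDef) : hM.posSemidef.sqrt.det ≠ 0 := by
  intro h
  have := sqrtM_det_sq hM
  rw [h, mul_zero] at this
  exact hM.det_pos.ne (by rw [this])

lemma abs_det_sqrtM (hM : M.PosDef) : |hM.posSemidef.sqrt.det| = Real.sqrt M.det := by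
  rw [← sqrtM_det_sq hM, Real.sqrt_mul_self_eq_abs]

lemma sqrtM_transpose (hM : M.PosDef) : (hM.posSemidef.sqrt)ᵀ = hM.posSemidef.sqrt := by
  rw [← Matrix.conjTranspose_eq_transpose_of_trivial]
  exact hM.posSemidef.posSemidef_sqrt.1

lemma mulVec_dot (A : Matrix (Fin N) (Fin N) ℝ) (x y : Fin N → ℝ) :
    (A *ᵥ x) ⬝ᵥ y = x ⬝ᵥ Aᵀ *ᵥ y := by
  rw [Matrix.dotProduct_mulVec x Aᵀ y, Matrix.vecMul_transpose]

lemma dot_shift (hM : M.PosDef) (x : Fin N → ℝ) :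
    (hM.posSemidef.sqrt *ᵥ x) ⬝ᵥ M⁻¹ *ᵥ (hM.posSemidef.sqrt *ᵥ x) = x ⬝ᵥ x := by
  have hdet : IsUnit (hM.posSemidef.sqrt).det := isUnit_iff_ne_zero.mpr (sqrtM_det_ne_zero hM)
  have hSS : hM.posSemidef.sqrt * hM.posSemidef.sqrt = M := hM.posSemidef.sqrt_mul_self
  generalize hSdef : hM.posSemidef.sqrt = S at *
  have h1 : (S *ᵥ x) ⬝ᵥ M⁻¹ *ᵥ (S *ᵥ x) = x ⬝ᵥ (Sᵀ * (M⁻¹ * S)) *ᵥ x := by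
    rw [mulVec_dot, Matrix.mulVec_mulVec, Matrix.mulVec_mulVec, ← mul_assoc]
  rw [h1]
  have hST : Sᵀ = S := by rw [← hSdef]; exact sqrtM_transpose hM
  have h2 : Sᵀ * (M⁻¹ * S) = 1 := by
    have hMinv : M⁻¹ = S⁻¹ * S⁻¹ := by
      rw [← hSS, Matrix.mul_inv_rev]
    rw [hST, hMinv]
    simp only [← mul_assoc]
    rw [Matrix.mul_nonsing_inv S hdet, one_mul, Matrix.nonsing_inv_mul S hdet]
  rw [h2, Matrix.one_mulVec]

lemma gauss_comp (hM : M.PosDef) (ρ : Fin N → ℝ) (x : Fin N → ℝ) :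
    gaussDensity M ρ (M *ᵥ ρ + hM.posSemidef.sqrt *ᵥ x)
      = ((2 * Real.pi) ^ N * M.det) ^ (-(1:ℝ)/2)
          * ∏ i, Real.exp (-(1/2) * (x i)^2) := by
  unfold gaussDensity
  congr 1
  rw [add_sub_cancel_left, dot_shift hM]
  have : x ⬝ᵥ x = ∑ i, (x i)^2 := by
    simp [dotProduct, sq]
  rw [this, Finset.mul_sum, Real.exp_sum]

lemma oneDim_integrable : Integrable (fun t : ℝ => Real.exp (-(1/2) * t^2)) :=
  integrable_exp_neg_mul_sq (by norm_num)

lemma oneDim_integral : ∫ t : ℝ, Real.exp (-(1/2) * t^2) = Real.sqrt (2 * Real.pi) := by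
  have h := integral_gaussian (1/2 : ℝ)
  rw [h, show (Real.pi / (1/2 : ℝ)) = 2 * Real.pi from by ring]
lemma norm_const {d : ℝ} (hd : 0 < d) (n : ℕ) :
    Real.sqrt d * (((2 * Real.pi) ^ n * d) ^ (-(1:ℝ)/2) * (Real.sqrt (2 * Real.pi)) ^ n) = 1 := by
  have hpi : (0:ℝ) < 2 * Real.pi := by positivity
  have ha : (0:ℝ) < (2 * Real.pi) ^ n := pow_pos hpi n
  have h1 : ((2 * Real.pi) ^ n * d) ^ (-(1:ℝ)/2)
      = (((2 * Real.pi) ^ n * d) ^ ((1:ℝ)/2))⁻¹ := by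
    rw [show (-(1:ℝ)/2) = -((1:ℝ)/2) by ring, Real.rpow_neg (by positivity)]
  have h2 : ((2 * Real.pi) ^ n * d) ^ ((1:ℝ)/2)
      = ((2 * Real.pi) ^ n) ^ ((1:ℝ)/2) * d ^ ((1:ℝ)/2) := Real.mul_rpow ha.le hd.le
  have h3 : Real.sqrt d = d ^ ((1:ℝ)/2) := Real.sqrt_eq_rpow d
  have h4 : (Real.sqrt (2 * Real.pi)) ^ n = ((2 * Real.pi) ^ n) ^ ((1:ℝ)/2) := by
    rw [Real.sqrt_eq_rpow, ← Real.rpow_natCast ((2*Real.pi) ^ ((1:ℝ)/2)) n,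
      ← Real.rpow_natCast (2*Real.pi) n, ← Real.rpow_mul hpi.le, ← Real.rpow_mul hpi.le,
      mul_comm ((1:ℝ)/2) (n:ℝ)]
  rw [h1, h2, h3, h4]
  have h5 : (0:ℝ) < ((2 * Real.pi) ^ n) ^ ((1:ℝ)/2) := Real.rpow_pos_of_pos ha _
  have h6 : (0:ℝ) < d ^ ((1:ℝ)/2) := Real.rpow_pos_of_pos hd _
  field_simp

lemma integrable_gauss {M : Matrix (Fin N) (Fin N) ℝ} (hM : M.PosDef) (ρ : Fin N → ℝ) :
    Integrable (gaussDensity M ρ) := by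
  rw [cov_integrable (sqrtM_det_ne_zero hM) (M *ᵥ ρ)]
  have heq : (fun x : Fin N → ℝ => gaussDensity M ρ (M *ᵥ ρ + hM.posSemidef.sqrt *ᵥ x))
      = fun x => ((2 * Real.pi) ^ N * M.det) ^ (-(1:ℝ)/2)
          * ∏ i, Real.exp (-(1/2) * (x i)^2) := by
    funext x; exact gauss_comp hM ρ x
  rw [heq]
  exact (Integrable.fintype_prod
    (f := fun (_ : Fin N) (t : ℝ) => Real.exp (-(1/2) * t^2))
    (fun i => oneDim_integrable)).const_mul _

lemma integral_gauss_one {M : Matrix (Fin N) (Fin N) ℝ} (hM : M.PosDef) (ρ : Fin N → ℝ) :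
    ∫ u, gaussDensity M ρ u = 1 := by
  rw [cov_integral (sqrtM_det_ne_zero hM) (M *ᵥ ρ) (gaussDensity M ρ)]
  have heq : (fun x : Fin N → ℝ => gaussDensity M ρ (M *ᵥ ρ + hM.posSemidef.sqrt *ᵥ x))
      = fun x => ((2 * Real.pi) ^ N * M.det) ^ (-(1:ℝ)/2)
          * ∏ i, Real.exp (-(1/2) * (x i)^2) := by
    funext x; exact gauss_comp hM ρ x
  rw [show (∫ x : Fin N → ℝ, gaussDensity M ρ (M *ᵥ ρ + hM.posSemidef.sqrt *ᵥ x))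
      = ∫ x : Fin N → ℝ, ((2 * Real.pi) ^ N * M.det) ^ (-(1:ℝ)/2)
          * ∏ i, Real.exp (-(1/2) * (x i)^2) from by rw [heq]]
  rw [MeasureTheory.integral_const_mul]
  rw [MeasureTheory.integral_fintype_prod_volume_eq_pow
    (fun t : ℝ => Real.exp (-(1/2) * t^2))]
  rw [oneDim_integral, abs_det_sqrtM hM, Fintype.card_fin]
  exact norm_const hM.det_pos N
lemma abs_le_one_add_sq (y : ℝ) : |y| ≤ 1 + y^2 := by
  nlinarith [sq_nonneg (|y| - 1), sq_abs y, abs_nonneg y]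

lemma one_add_sum_le_prod (g : Fin N → ℝ) (hg : ∀ i, 0 ≤ g i) :
    1 + ∑ i, g i ≤ ∏ i, (1 + g i) := by
  classical
  have : ∀ s : Finset (Fin N), 1 + ∑ i ∈ s, g i ≤ ∏ i ∈ s, (1 + g i) := by
    intro s
    induction s using Finset.cons_induction with
    | empty => simp
    | cons a s ha ih =>
      rw [Finset.sum_cons, Finset.prod_cons]
      have h1 : (0:ℝ) ≤ ∑ i ∈ s, g i := Finset.sum_nonneg fun i _ => hg i
      nlinarith [hg a, ih]
  exact this Finset.univ

lemma oneD_bound_integrable :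
    Integrable (fun t : ℝ => (1 + t^2)^2 * Real.exp (-(1/2) * t^2)) := by
  have i2 : Integrable (fun t : ℝ => t^2 * Real.exp (-(1/2) * t^2)) := by
    have h := integrable_rpow_mul_exp_neg_mul_sq (b := 1/2) (by norm_num) (s := 2) (by norm_num)
    have e : ∀ t : ℝ, t ^ (2:ℝ) * Real.exp (-(1/2) * t^2) = t^2 * Real.exp (-(1/2) * t^2) :=
      fun t => by rw [show (2:ℝ) = ((2:ℕ):ℝ) by norm_num, Real.rpow_natCast]
    exact h.congr (Filter.Eventually.of_forall fun t => e t)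
  have i4 : Integrable (fun t : ℝ => t^4 * Real.exp (-(1/2) * t^2)) := by
    have h := integrable_rpow_mul_exp_neg_mul_sq (b := 1/2) (by norm_num) (s := 4) (by norm_num)
    have e : ∀ t : ℝ, t ^ (4:ℝ) * Real.exp (-(1/2) * t^2) = t^4 * Real.exp (-(1/2) * t^2) :=
      fun t => by rw [show (4:ℝ) = ((4:ℕ):ℝ) by norm_num, Real.rpow_natCast]
    exact h.congr (Filter.Eventually.of_forall fun t => e t)
  have := (oneDim_integrable.add (i2.const_mul 2)).add i4
  refine this.congr (Filter.Eventually.of_forall fun t => ?_)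
  simp only [Pi.add_apply]
  ring

lemma continuous_mulVec (A : Matrix (Fin N) (Fin N) ℝ) :
    Continuous (fun u : Fin N → ℝ => A *ᵥ u) := by
  have h : (fun u : Fin N → ℝ => A *ᵥ u) = ⇑(Matrix.toLin' A) :=
    funext fun u => (Matrix.toLin'_apply A u).symm
  rw [h]
  exact (Matrix.toLin' A).continuous_of_finiteDimensional

lemma continuous_dot {α : Type*} [TopologicalSpace α] {f g : α → (Fin N → ℝ)}
    (hf : Continuous f) (hg : Continuous g) :
    Continuous (fun u => f u ⬝ᵥ g u) := by
  have h : (fun u => f u ⬝ᵥ g u) = fun u => ∑ i, f u i * g u i := rfl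
  rw [h]
  exact continuous_finset_sum _ fun i _ =>
    ((continuous_apply i).comp hf).mul ((continuous_apply i).comp hg)

lemma dot_self_nonneg (v : Fin N → ℝ) : 0 ≤ v ⬝ᵥ v :=
  Finset.sum_nonneg fun i _ => mul_self_nonneg (v i)

lemma quad_bound (B : Matrix (Fin N) (Fin N) ℝ) (d : Fin N → ℝ) (x : Fin N → ℝ) :
    (B *ᵥ x + d) ⬝ᵥ (B *ᵥ x + d)
      ≤ (∑ i, ((∑ j, |B i j|) + |d i|)^2) * (∏ i, (1 + (x i)^2))^2 := by
  set t := 1 + ∑ j, (x j)^2 with ht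
  have ht1 : (1:ℝ) ≤ t := le_add_of_nonneg_right (Finset.sum_nonneg fun j _ => sq_nonneg _)
  have ht0 : (0:ℝ) ≤ t := le_trans zero_le_one ht1
  have hxj : ∀ j, |x j| ≤ t := by
    intro j
    refine le_trans (abs_le_one_add_sq (x j)) ?_
    exact add_le_add_right
      (Finset.single_le_sum (fun k _ => sq_nonneg (x k)) (Finset.mem_univ j)) 1
  have hrow : ∀ i, ((B *ᵥ x + d) i)^2 ≤ ((∑ j, |B i j|) + |d i|)^2 * t^2 := by
    intro i
    have h1 : |(B *ᵥ x + d) i| ≤ ((∑ j, |B i j|) + |d i|) * t := by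
      have he : (B *ᵥ x + d) i = (∑ j, B i j * x j) + d i := by
        simp [Matrix.mulVec, dotProduct]
      rw [he]
      calc |(∑ j, B i j * x j) + d i| ≤ |∑ j, B i j * x j| + |d i| := abs_add_le _ _
        _ ≤ (∑ j, |B i j * x j|) + |d i| :=
            add_le_add_left (Finset.abs_sum_le_sum_abs _ _) _
        _ ≤ (∑ j, |B i j| * t) + |d i| * t := by
            refine add_le_add (Finset.sum_le_sum fun j _ => ?_)
              (le_mul_of_one_le_right (abs_nonneg _) ht1)
            rw [abs_mul]
            exact mul_le_mul_of_nonneg_left (hxj j) (abs_nonneg _)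
        _ = ((∑ j, |B i j|) + |d i|) * t := by rw [← Finset.sum_mul]; ring
    calc ((B *ᵥ x + d) i)^2 = |(B *ᵥ x + d) i|^2 := (sq_abs _).symm
      _ ≤ (((∑ j, |B i j|) + |d i|) * t)^2 := pow_le_pow_left₀ (abs_nonneg _) h1 2
      _ = ((∑ j, |B i j|) + |d i|)^2 * t^2 := mul_pow _ _ 2
  have hdot : (B *ᵥ x + d) ⬝ᵥ (B *ᵥ x + d) = ∑ i, ((B *ᵥ x + d) i)^2 := by
    simp [dotProduct, sq]
  have htm : t ≤ ∏ i, (1 + (x i)^2) := one_add_sum_le_prod _ (fun i => sq_nonneg _)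
  have ht2 : t^2 ≤ (∏ i, (1 + (x i)^2))^2 := pow_le_pow_left₀ ht0 htm 2
  calc (B *ᵥ x + d) ⬝ᵥ (B *ᵥ x + d) = ∑ i, ((B *ᵥ x + d) i)^2 := hdot
    _ ≤ ∑ i, ((∑ j, |B i j|) + |d i|)^2 * t^2 := Finset.sum_le_sum fun i _ => hrow i
    _ = (∑ i, ((∑ j, |B i j|) + |d i|)^2) * t^2 := by rw [Finset.sum_mul]
    _ ≤ (∑ i, ((∑ j, |B i j|) + |d i|)^2) * (∏ i, (1 + (x i)^2))^2 :=
        mul_le_mul_of_nonneg_left ht2 (Finset.sum_nonneg fun i _ => sq_nonneg _)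

lemma integrable_quad_mul_gauss {M : Matrix (Fin N) (Fin N) ℝ} (hM : M.PosDef)
    (ρ : Fin N → ℝ) (A : Matrix (Fin N) (Fin N) ℝ) :
    Integrable (fun u => ((A *ᵥ u) ⬝ᵥ (A *ᵥ u)) * gaussDensity M ρ u) := by
  rw [cov_integrable (sqrtM_det_ne_zero hM) (M *ᵥ ρ)]
  set S := hM.posSemidef.sqrt with hSdef
  set c₀ := ((2 * Real.pi) ^ N * M.det) ^ (-(1:ℝ)/2) with hc₀def
  have hc₀ : 0 < c₀ := Real.rpow_pos_of_pos
    (mul_pos (pow_pos (by positivity) N) hM.det_pos) _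
  set B := A * S with hBdef
  set d := A *ᵥ (M *ᵥ ρ) with hddef
  set C := ∑ i, ((∑ j, |B i j|) + |d i|)^2 with hCdef
  have hC : 0 ≤ C := Finset.sum_nonneg fun i _ => sq_nonneg _
  have hrw : ∀ x : Fin N → ℝ, A *ᵥ (M *ᵥ ρ + S *ᵥ x) = B *ᵥ x + d := by
    intro x
    rw [Matrix.mulVec_add, hBdef, ← Matrix.mulVec_mulVec]
    exact add_comm _ _
  refine Integrable.mono
    (g := fun x : Fin N → ℝ =>
      (C * c₀) * ∏ i, ((1 + (x i)^2)^2 * Real.exp (-(1/2) * (x i)^2))) ?_ ?_ ?_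
  · exact (Integrable.fintype_prod
      (f := fun (_ : Fin N) (t : ℝ) => (1 + t^2)^2 * Real.exp (-(1/2) * t^2))
      (fun i => oneD_bound_integrable)).const_mul _
  · refine Continuous.aestronglyMeasurable ?_
    have h1 : Continuous (fun x : Fin N → ℝ => M *ᵥ ρ + S *ᵥ x) :=
      continuous_const.add (continuous_mulVec S)
    exact (continuous_dot ((continuous_mulVec A).comp h1)
      ((continuous_mulVec A).comp h1)).mul ((continuous_gauss hM ρ).comp h1)
  · refine Filter.Eventually.of_forall fun x => ?_
    have hq0 : 0 ≤ (A *ᵥ (M *ᵥ ρ + S *ᵥ x)) ⬝ᵥ (A *ᵥ (M *ᵥ ρ + S *ᵥ x)) :=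
      dot_self_nonneg _
    have hp0 : 0 < gaussDensity M ρ (M *ᵥ ρ + S *ᵥ x) := gauss_pos hM ρ _
    rw [Real.norm_eq_abs, abs_of_nonneg (mul_nonneg hq0 hp0.le), Real.norm_eq_abs]
    have hgoal : ((A *ᵥ (M *ᵥ ρ + S *ᵥ x)) ⬝ᵥ (A *ᵥ (M *ᵥ ρ + S *ᵥ x)))
        * gaussDensity M ρ (M *ᵥ ρ + S *ᵥ x)
        ≤ (C * c₀) * ∏ i, ((1 + (x i)^2)^2 * Real.exp (-(1/2) * (x i)^2)) := by
      rw [gauss_comp hM ρ x, hrw x]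
      have hexp0 : (0:ℝ) ≤ ∏ i, Real.exp (-(1/2) * (x i)^2) :=
        Finset.prod_nonneg fun i _ => (Real.exp_pos _).le
      calc ((B *ᵥ x + d) ⬝ᵥ (B *ᵥ x + d)) * (c₀ * ∏ i, Real.exp (-(1/2) * (x i)^2))
          ≤ (C * (∏ i, (1 + (x i)^2))^2) * (c₀ * ∏ i, Real.exp (-(1/2) * (x i)^2)) := by
            refine mul_le_mul_of_nonneg_right (quad_bound B d x) ?_
            exact mul_nonneg hc₀.le hexp0
        _ = (C * c₀) * ((∏ i, (1 + (x i)^2)^2) * ∏ i, Real.exp (-(1/2) * (x i)^2)) := by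
            rw [← Finset.prod_pow]
            ring
        _ = (C * c₀) * ∏ i, ((1 + (x i)^2)^2 * Real.exp (-(1/2) * (x i)^2)) := by
            rw [← Finset.prod_mul_distrib]
    refine le_trans hgoal (le_abs_self _)

end EnsureAux

set_option maxHeartbeats 1000000 in
open EnsureAux in
/-- **Lemma 2 (ENSURE unbiasedness, core identity, nondegenerate case).**
Let `M` be symmetric positive definite, `ρ ∈ ℝ^N`, `p` the Gaussian density with mean `M ρ`
and covariance `M`, `f : ℝ^N → ℝ^N` continuously differentiable with compact support, `W`
an arbitrary matrix and `D = Wᵀ W`.  Then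
`∫ ‖W (f(u) − ρ)‖² p(u) du`
`  = ∫ [‖W (f(u) − M⁻¹ u)‖² + 2 div(D f)(u)] p(u) du + κ`,
where `κ = ‖W ρ‖² − ∫ ‖W M⁻¹ u‖² p(u) du`. -/
theorem ensure_unbiased_core_identity
    {N : ℕ} (hN : 0 < N)
    (M : Matrix (Fin N) (Fin N) ℝ) (hM : M.PosDef)
    (ρ : Fin N → ℝ)
    (f : (Fin N → ℝ) → (Fin N → ℝ))
    (hf : ContDiff ℝ 1 f) (hfsupp : HasCompactSupport f)
    (W : Matrix (Fin N) (Fin N) ℝ) :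
    ∫ u, ((W.mulVec (f u - ρ)) ⬝ᵥ (W.mulVec (f u - ρ))) * gaussDensity M ρ u
      = (∫ u,
            ((W.mulVec (f u - M⁻¹.mulVec u)) ⬝ᵥ (W.mulVec (f u - M⁻¹.mulVec u))
              + 2 * divergence (fun v => (Wᵀ * W).mulVec (f v)) u) * gaussDensity M ρ u)
        + ((W.mulVec ρ) ⬝ᵥ (W.mulVec ρ)
            - ∫ u, ((W.mulVec (M⁻¹.mulVec u)) ⬝ᵥ (W.mulVec (M⁻¹.mulVec u)))
                * gaussDensity M ρ u) := by
  
  classical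
  have hMdet : IsUnit M.det := isUnit_iff_ne_zero.mpr hM.det_pos.ne'
  set p := gaussDensity M ρ with hp
  set μc := M *ᵥ ρ with hμc
  set g : (Fin N → ℝ) → (Fin N → ℝ) := fun v => (Wᵀ * W) *ᵥ f v with hgdef
  -- basic properties of g
  have hgC1 : ContDiff ℝ 1 g := by
    have hL : (fun v => (Wᵀ * W) *ᵥ f v)
        = fun v => (LinearMap.toContinuousLinearMap (Matrix.toLin' (Wᵀ * W))) (f v) := by
      funext v; simp [Matrix.toLin'_apply]
    rw [hgdef, hL]
    exact (LinearMap.toContinuousLinearMap (Matrix.toLin' (Wᵀ * W))).contDiff.comp hf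
  have hgdiff : Differentiable ℝ g := hgC1.differentiable one_ne_zero
  have hgsupp : HasCompactSupport g :=
    hfsupp.comp_left (g := fun y => (Wᵀ * W) *ᵥ y) (Matrix.mulVec_zero _)
  have hgcontfd : Continuous (fderiv ℝ g) := hgC1.continuous_fderiv one_ne_zero
  have hgfdsupp : HasCompactSupport (fderiv ℝ g) := hgsupp.fderiv ℝ
  -- coordinate functions of g
  have hgi_fderiv : ∀ (i : Fin N) (u v : Fin N → ℝ),
      fderiv ℝ (fun w => g w i) u v = (fderiv ℝ g u v) i := by
    intro i u v
    have h := ((ContinuousLinearMap.proj i :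
        (Fin N → ℝ) →L[ℝ] ℝ).hasFDerivAt).comp u (hgdiff u).hasFDerivAt
    have h' : HasFDerivAt (fun w => g w i)
        ((ContinuousLinearMap.proj i :
          (Fin N → ℝ) →L[ℝ] ℝ).comp (fderiv ℝ g u)) u := h
    rw [h'.fderiv]
    rfl
  have hgidiff : ∀ i : Fin N, Differentiable ℝ (fun w => g w i) := by
    intro i
    exact fun u => (((ContinuousLinearMap.proj i :
      (Fin N → ℝ) →L[ℝ] ℝ).hasFDerivAt).comp u (hgdiff u).hasFDerivAt).differentiableAt
  have hgcont : Continuous g := hgdiff.continuous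
  -- properties of p
  have hpdiff : Differentiable ℝ p := differentiable_gauss hM ρ
  have hpcont : Continuous p := continuous_gauss hM ρ
  have hppos : ∀ u, 0 < p u := gauss_pos hM ρ
  have hpfderiv : ∀ (u v : Fin N → ℝ),
      fderiv ℝ p u v = -((M⁻¹ *ᵥ (u - μc)) ⬝ᵥ v) * p u := fderiv_gauss_apply hM ρ
  have hpfd_cont : ∀ i : Fin N, Continuous (fun u => fderiv ℝ p u (Pi.single i 1)) := by
    intro i
    have : (fun u => fderiv ℝ p u (Pi.single i 1))
        = fun u => -((M⁻¹ *ᵥ (u - μc)) ⬝ᵥ (Pi.single i 1)) * p u :=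
      funext fun u => hpfderiv u _
    rw [this]
    exact (((continuous_dot ((continuous_mulVec M⁻¹).comp
      (continuous_id.sub continuous_const)) continuous_const)).neg).mul hpcont
  -- compact support helper
  have hCS : ∀ (h : (Fin N → ℝ) → ℝ), (∀ u, f u = 0 → h u = 0) → HasCompactSupport h := by
    intro h hh
    refine hfsupp.mono ?_
    intro u hu
    simp only [Function.mem_support] at hu ⊢
    exact fun h0 => hu (hh u h0)
  have hgz : ∀ u, f u = 0 → g u = 0 := by
    intro u h0
    simp [hgdef, h0, Matrix.mulVec_zero]
  -- integration by parts, coordinatewise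
  have hIntA : ∀ i : Fin N,
      Integrable (fun u => fderiv ℝ p u (Pi.single i 1) * g u i) := by
    intro i
    refine Continuous.integrable_of_hasCompactSupport
      ((hpfd_cont i).mul ((continuous_apply i).comp hgcont)) (hCS _ ?_)
    intro u h0
    rw [hgz u h0]
    simp
  have hIntB : ∀ i : Fin N,
      Integrable (fun u => p u * fderiv ℝ (fun w => g w i) u (Pi.single i 1)) := by
    intro i
    have hc : Continuous (fun u => fderiv ℝ (fun w => g w i) u (Pi.single i 1)) := by
      have : (fun u => fderiv ℝ (fun w => g w i) u (Pi.single i 1))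
          = fun u => (fderiv ℝ g u (Pi.single i 1)) i := funext fun u => hgi_fderiv i u _
      rw [this]
      exact (continuous_apply i).comp
        ((ContinuousLinearMap.apply ℝ (Fin N → ℝ) (Pi.single i 1)).continuous.comp hgcontfd)
    refine Continuous.integrable_of_hasCompactSupport (hpcont.mul hc) ?_
    have hsupp : HasCompactSupport (fun u => fderiv ℝ (fun w => g w i) u (Pi.single i 1)) := by
      have : (fun u => fderiv ℝ (fun w => g w i) u (Pi.single i 1))
          = (fun L : (Fin N → ℝ) →L[ℝ] (Fin N → ℝ) => L (Pi.single i 1) i) ∘ (fderiv ℝ g) := by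
        funext u; exact hgi_fderiv i u _
      rw [this]
      exact hgfdsupp.comp_left rfl
    exact hsupp.mul_left
  have hIntC : ∀ i : Fin N, Integrable (fun u => p u * g u i) := by
    intro i
    refine Continuous.integrable_of_hasCompactSupport
      (hpcont.mul ((continuous_apply i).comp hgcont)) (hCS _ ?_)
    intro u h0
    rw [hgz u h0]
    simp
  have hIBP : ∀ i : Fin N,
      ∫ u, p u * fderiv ℝ (fun w => g w i) u (Pi.single i 1)
        = - ∫ u, fderiv ℝ p u (Pi.single i 1) * g u i := by
    intro i
    exact integral_mul_fderiv_eq_neg_fderiv_mul_of_integrable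
      (hIntA i) (hIntB i) (hIntC i) (fun x _ => hpdiff x) (fun x _ => hgidiff i x)
  -- divergence formula
  have hdiveq : ∀ u, divergence g u = ∑ i, fderiv ℝ g u (Pi.single i 1) i :=
    divergence_eq g
  -- Stein's identity
  have e2 : ∀ u, ∑ i, fderiv ℝ p u (Pi.single i 1) * g u i
      = -(((M⁻¹ *ᵥ (u - μc)) ⬝ᵥ g u) * p u) := by
    intro u
    have hterm : ∀ i, fderiv ℝ p u (Pi.single i 1) * g u i
        = -((M⁻¹ *ᵥ (u - μc)) i * g u i * p u) := by
      intro i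
      rw [hpfderiv u, dotProduct_single]
      ring
    calc ∑ i, fderiv ℝ p u (Pi.single i 1) * g u i
        = ∑ i, -((M⁻¹ *ᵥ (u - μc)) i * g u i * p u) :=
          Finset.sum_congr rfl (fun i _ => hterm i)
      _ = -∑ i, (M⁻¹ *ᵥ (u - μc)) i * g u i * p u := by
          rw [Finset.sum_neg_distrib]
      _ = -((∑ i, (M⁻¹ *ᵥ (u - μc)) i * g u i) * p u) := by
          rw [Finset.sum_mul]
      _ = -(((M⁻¹ *ᵥ (u - μc)) ⬝ᵥ g u) * p u) := rfl
  have hStein0 : ∫ u, divergence g u * p u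
      = ∫ u, ((M⁻¹ *ᵥ (u - μc)) ⬝ᵥ g u) * p u := by
    have e1 : ∀ u, divergence g u * p u
        = ∑ i, p u * fderiv ℝ (fun w => g w i) u (Pi.single i 1) := by
      intro u
      rw [hdiveq u, Finset.sum_mul]
      refine Finset.sum_congr rfl fun i _ => ?_
      rw [hgi_fderiv i u]
      ring
    calc ∫ u, divergence g u * p u
        = ∫ u, ∑ i, p u * fderiv ℝ (fun w => g w i) u (Pi.single i 1) :=
          MeasureTheory.integral_congr_ae (Filter.Eventually.of_forall e1)
      _ = ∑ i, ∫ u, p u * fderiv ℝ (fun w => g w i) u (Pi.single i 1) :=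
          MeasureTheory.integral_finset_sum Finset.univ (fun i _ => hIntB i)
      _ = ∑ i, - ∫ u, fderiv ℝ p u (Pi.single i 1) * g u i :=
          Finset.sum_congr rfl fun i _ => hIBP i
      _ = - ∑ i, ∫ u, fderiv ℝ p u (Pi.single i 1) * g u i := by
          rw [Finset.sum_neg_distrib]
      _ = - ∫ u, ∑ i, fderiv ℝ p u (Pi.single i 1) * g u i := by
          rw [MeasureTheory.integral_finset_sum Finset.univ (fun i _ => hIntA i)]
      _ = - ∫ u, -(((M⁻¹ *ᵥ (u - μc)) ⬝ᵥ g u) * p u) := by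
          rw [MeasureTheory.integral_congr_ae (Filter.Eventually.of_forall e2)]
      _ = ∫ u, ((M⁻¹ *ᵥ (u - μc)) ⬝ᵥ g u) * p u := by
          rw [MeasureTheory.integral_neg, neg_neg]
  have hform : ∀ u, ((M⁻¹ *ᵥ (u - μc)) ⬝ᵥ g u) * p u
      = ((W *ᵥ f u) ⬝ᵥ (W *ᵥ (M⁻¹ *ᵥ u))) * p u
        - ((W *ᵥ f u) ⬝ᵥ (W *ᵥ ρ)) * p u := by
    intro u
    have h1 : M⁻¹ *ᵥ (u - μc) = M⁻¹ *ᵥ u - ρ := by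
      rw [hμc, Matrix.mulVec_sub, Matrix.mulVec_mulVec,
        Matrix.nonsing_inv_mul M hMdet, Matrix.one_mulVec]
    have h2 : ∀ z : Fin N → ℝ, z ⬝ᵥ g u = (W *ᵥ z) ⬝ᵥ (W *ᵥ f u) := by
      intro z
      show z ⬝ᵥ ((Wᵀ * W) *ᵥ f u) = _
      rw [← Matrix.mulVec_mulVec, Matrix.dotProduct_mulVec z Wᵀ,
        Matrix.vecMul_transpose]
    rw [h1, h2, Matrix.mulVec_sub, sub_dotProduct,
      dotProduct_comm (W *ᵥ (M⁻¹ *ᵥ u)) (W *ᵥ f u),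
      dotProduct_comm (W *ᵥ ρ) (W *ᵥ f u)]
    ring
  -- integrability of all pieces
  have hI1 : Integrable (fun u => ((W *ᵥ f u) ⬝ᵥ (W *ᵥ f u)) * p u) := by
    refine Continuous.integrable_of_hasCompactSupport
      (((continuous_dot ((continuous_mulVec W).comp hf.continuous)
        ((continuous_mulVec W).comp hf.continuous))).mul hpcont) (hCS _ ?_)
    intro u h0
    simp [h0, Matrix.mulVec_zero]
  have hI2 : Integrable (fun u => ((W *ᵥ f u) ⬝ᵥ (W *ᵥ ρ)) * p u) := by
    refine Continuous.integrable_of_hasCompactSupport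
      (((continuous_dot ((continuous_mulVec W).comp hf.continuous)
        continuous_const)).mul hpcont) (hCS _ ?_)
    intro u h0
    simp [h0, Matrix.mulVec_zero]
  have hI3 : Integrable (fun u => ((W *ᵥ f u) ⬝ᵥ (W *ᵥ (M⁻¹ *ᵥ u))) * p u) := by
    refine Continuous.integrable_of_hasCompactSupport
      (((continuous_dot ((continuous_mulVec W).comp hf.continuous)
        ((continuous_mulVec W).comp ((continuous_mulVec M⁻¹).comp continuous_id)))).mul
        hpcont) (hCS _ ?_)
    intro u h0
    simp [h0, Matrix.mulVec_zero]
  have hI4 : Integrable (fun u => ((W *ᵥ (M⁻¹ *ᵥ u)) ⬝ᵥ (W *ᵥ (M⁻¹ *ᵥ u))) * p u) := by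
    have h := integrable_quad_mul_gauss hM ρ (W * M⁻¹)
    refine h.congr (Filter.Eventually.of_forall fun u => ?_)
    show ((W * M⁻¹) *ᵥ u) ⬝ᵥ ((W * M⁻¹) *ᵥ u) * gaussDensity M ρ u
        = ((W *ᵥ (M⁻¹ *ᵥ u)) ⬝ᵥ (W *ᵥ (M⁻¹ *ᵥ u))) * p u
    rw [← Matrix.mulVec_mulVec]
  have hI5 : Integrable (fun u => divergence g u * p u) := by
    have hcontdiv : Continuous (fun u => divergence g u) := by
      have : (fun u => divergence g u)
          = fun u => ∑ i, fderiv ℝ g u (Pi.single i 1) i := funext hdiveq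
      rw [this]
      exact continuous_finset_sum _ fun i _ => (continuous_apply i).comp
        ((ContinuousLinearMap.apply ℝ (Fin N → ℝ) (Pi.single i 1)).continuous.comp hgcontfd)
    refine Continuous.integrable_of_hasCompactSupport (hcontdiv.mul hpcont) ?_
    refine hgfdsupp.mono ?_
    intro u hu
    simp only [Function.mem_support] at hu ⊢
    intro h0
    apply hu
    rw [hdiveq u]
    simp [h0]
  have hI6 : Integrable p := integrable_gauss hM ρ
  have hIPone : ∫ u, p u = 1 := integral_gauss_one hM ρ
  -- Stein in final form
  have hStein : ∫ u, divergence g u * p u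
      = (∫ u, ((W *ᵥ f u) ⬝ᵥ (W *ᵥ (M⁻¹ *ᵥ u))) * p u)
        - ∫ u, ((W *ᵥ f u) ⬝ᵥ (W *ᵥ ρ)) * p u := by
    rw [hStein0, MeasureTheory.integral_congr_ae (Filter.Eventually.of_forall hform)]
    exact MeasureTheory.integral_sub hI3 hI2
  -- expand the left-hand side
  have hLHS : ∫ u, ((W *ᵥ (f u - ρ)) ⬝ᵥ (W *ᵥ (f u - ρ))) * p u
      = (∫ u, ((W *ᵥ f u) ⬝ᵥ (W *ᵥ f u)) * p u)
        - 2 * (∫ u, ((W *ᵥ f u) ⬝ᵥ (W *ᵥ ρ)) * p u)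
        + ((W *ᵥ ρ) ⬝ᵥ (W *ᵥ ρ)) := by
    have e : ∀ u, ((W *ᵥ (f u - ρ)) ⬝ᵥ (W *ᵥ (f u - ρ))) * p u
        = (((W *ᵥ f u) ⬝ᵥ (W *ᵥ f u)) * p u
            - 2 * (((W *ᵥ f u) ⬝ᵥ (W *ᵥ ρ)) * p u))
          + ((W *ᵥ ρ) ⬝ᵥ (W *ᵥ ρ)) * p u := by
      intro u
      rw [Matrix.mulVec_sub, sub_dotProduct, dotProduct_sub,
        dotProduct_sub, dotProduct_comm (W *ᵥ ρ) (W *ᵥ f u)]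
      ring
    rw [MeasureTheory.integral_congr_ae (Filter.Eventually.of_forall e)]
    have s1 : ∫ u, ((((W *ᵥ f u) ⬝ᵥ (W *ᵥ f u)) * p u
            - 2 * (((W *ᵥ f u) ⬝ᵥ (W *ᵥ ρ)) * p u))
          + ((W *ᵥ ρ) ⬝ᵥ (W *ᵥ ρ)) * p u)
        = (∫ u, (((W *ᵥ f u) ⬝ᵥ (W *ᵥ f u)) * p u
            - 2 * (((W *ᵥ f u) ⬝ᵥ (W *ᵥ ρ)) * p u)))
          + ∫ u, ((W *ᵥ ρ) ⬝ᵥ (W *ᵥ ρ)) * p u :=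
      MeasureTheory.integral_add (hI1.sub (hI2.const_mul 2)) (hI6.const_mul _)
    have s2 : ∫ u, (((W *ᵥ f u) ⬝ᵥ (W *ᵥ f u)) * p u
            - 2 * (((W *ᵥ f u) ⬝ᵥ (W *ᵥ ρ)) * p u))
        = (∫ u, ((W *ᵥ f u) ⬝ᵥ (W *ᵥ f u)) * p u)
          - ∫ u, 2 * (((W *ᵥ f u) ⬝ᵥ (W *ᵥ ρ)) * p u) :=
      MeasureTheory.integral_sub hI1 (hI2.const_mul 2)
    rw [s1, s2, MeasureTheory.integral_const_mul, MeasureTheory.integral_const_mul,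
      hIPone, mul_one]
  -- expand the first integral on the right-hand side
  have hRHS : ∫ u, (((W *ᵥ (f u - M⁻¹ *ᵥ u)) ⬝ᵥ (W *ᵥ (f u - M⁻¹ *ᵥ u)))
        + 2 * divergence g u) * p u
      = (∫ u, ((W *ᵥ f u) ⬝ᵥ (W *ᵥ f u)) * p u)
        - 2 * (∫ u, ((W *ᵥ f u) ⬝ᵥ (W *ᵥ (M⁻¹ *ᵥ u))) * p u)
        + (∫ u, ((W *ᵥ (M⁻¹ *ᵥ u)) ⬝ᵥ (W *ᵥ (M⁻¹ *ᵥ u))) * p u)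
        + 2 * ∫ u, divergence g u * p u := by
    have e : ∀ u, (((W *ᵥ (f u - M⁻¹ *ᵥ u)) ⬝ᵥ (W *ᵥ (f u - M⁻¹ *ᵥ u)))
          + 2 * divergence g u) * p u
        = ((((W *ᵥ f u) ⬝ᵥ (W *ᵥ f u)) * p u
            - 2 * (((W *ᵥ f u) ⬝ᵥ (W *ᵥ (M⁻¹ *ᵥ u))) * p u))
          + ((W *ᵥ (M⁻¹ *ᵥ u)) ⬝ᵥ (W *ᵥ (M⁻¹ *ᵥ u))) * p u)
          + 2 * (divergence g u * p u) := by
      intro u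
      rw [Matrix.mulVec_sub, sub_dotProduct, dotProduct_sub,
        dotProduct_sub,
        dotProduct_comm (W *ᵥ (M⁻¹ *ᵥ u)) (W *ᵥ f u)]
      ring
    rw [MeasureTheory.integral_congr_ae (Filter.Eventually.of_forall e)]
    have s1 : ∫ u, (((((W *ᵥ f u) ⬝ᵥ (W *ᵥ f u)) * p u
            - 2 * (((W *ᵥ f u) ⬝ᵥ (W *ᵥ (M⁻¹ *ᵥ u))) * p u))
          + ((W *ᵥ (M⁻¹ *ᵥ u)) ⬝ᵥ (W *ᵥ (M⁻¹ *ᵥ u))) * p u)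
          + 2 * (divergence g u * p u))
        = (∫ u, ((((W *ᵥ f u) ⬝ᵥ (W *ᵥ f u)) * p u
            - 2 * (((W *ᵥ f u) ⬝ᵥ (W *ᵥ (M⁻¹ *ᵥ u))) * p u))
          + ((W *ᵥ (M⁻¹ *ᵥ u)) ⬝ᵥ (W *ᵥ (M⁻¹ *ᵥ u))) * p u))
          + ∫ u, 2 * (divergence g u * p u) :=
      MeasureTheory.integral_add ((hI1.sub (hI3.const_mul 2)).add hI4) (hI5.const_mul 2)
    have s2 : ∫ u, ((((W *ᵥ f u) ⬝ᵥ (W *ᵥ f u)) * p u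
            - 2 * (((W *ᵥ f u) ⬝ᵥ (W *ᵥ (M⁻¹ *ᵥ u))) * p u))
          + ((W *ᵥ (M⁻¹ *ᵥ u)) ⬝ᵥ (W *ᵥ (M⁻¹ *ᵥ u))) * p u)
        = (∫ u, (((W *ᵥ f u) ⬝ᵥ (W *ᵥ f u)) * p u
            - 2 * (((W *ᵥ f u) ⬝ᵥ (W *ᵥ (M⁻¹ *ᵥ u))) * p u)))
          + ∫ u, ((W *ᵥ (M⁻¹ *ᵥ u)) ⬝ᵥ (W *ᵥ (M⁻¹ *ᵥ u))) * p u :=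
      MeasureTheory.integral_add (hI1.sub (hI3.const_mul 2)) hI4
    have s3 : ∫ u, (((W *ᵥ f u) ⬝ᵥ (W *ᵥ f u)) * p u
            - 2 * (((W *ᵥ f u) ⬝ᵥ (W *ᵥ (M⁻¹ *ᵥ u))) * p u))
        = (∫ u, ((W *ᵥ f u) ⬝ᵥ (W *ᵥ f u)) * p u)
          - ∫ u, 2 * (((W *ᵥ f u) ⬝ᵥ (W *ᵥ (M⁻¹ *ᵥ u))) * p u) :=
      MeasureTheory.integral_sub hI1 (hI3.const_mul 2)
    rw [s1, s2, s3, MeasureTheory.integral_const_mul, MeasureTheory.integral_const_mul]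
  rw [hLHS, hRHS]
  linarith [hStein]
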